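/- Let n ≥ 2 be an integer. For every real x with 0 < |x| < 2^(−1/(n−1)), set X = x·(1 − 2·x^(n−1))^(−1/(2n−2)) and h(X) = X^(n−1)/√(1 + X^(2n−2)). Then h(X) = x^(n−1)/(1 − x^(n−1)) and X/(1 + h(X)) = x·(1 − x^(n−1))·(1 − 2·x^(n−1))^(−1/(2n−2)); in particular X/(1 + h(X)) = g(x)·e^(F(x)), where g(x) = (1 − 2x^(n−1))(x − x^n) and e^(F(x)) = (1 − 2x^(n−1))^((1−2n)/(2n−2)). -/

import Mathlib

/-- For `0 < |x| < 2^(−1/(n−1))`, with `X = x(1 − 2x^(n−1))^(−1/(2n−2))` and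
`h(X) = X^(n−1)/√(1 + X^(2n−2))`, one has `h(X) = x^(n−1)/(1 − x^(n−1))` and
`X/(1 + h(X)) = x(1 − x^(n−1))(1 − 2x^(n−1))^(−1/(2n−2)) = g(x)e^{F(x)}`, where
`g(x) = (1 − 2x^(n−1))(x − xⁿ)` and `e^{F(x)} = (1 − 2x^(n−1))^((1−2n)/(2n−2))`. -/
theorem stmt_6 (n : ℕ) (hn : 2 ≤ n) (x : ℝ) (hx0 : 0 < |x|)
    (hx : |x| < (2 : ℝ) ^ (-(1 / ((n : ℝ) - 1)))) (X h : ℝ)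
    (hX : X = x * (1 - 2 * x ^ (n - 1)) ^ (-(1 / (2 * (n : ℝ) - 2))))
    (hh : h = X ^ (n - 1) / Real.sqrt (1 + X ^ (2 * n - 2))) :
    h = x ^ (n - 1) / (1 - x ^ (n - 1)) ∧
    X / (1 + h) =
      x * (1 - x ^ (n - 1)) * (1 - 2 * x ^ (n - 1)) ^ (-(1 / (2 * (n : ℝ) - 2))) ∧
    X / (1 + h) =
      ((1 - 2 * x ^ (n - 1)) * (x - x ^ n)) *
        (1 - 2 * x ^ (n - 1)) ^ ((1 - 2 * (n : ℝ)) / (2 * (n : ℝ) - 2)) := by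
  have hn1 : 1 ≤ n := by omega
  have hnR : (2:ℝ) ≤ (n:ℝ) := by exact_mod_cast hn
  have hcast : ((n-1:ℕ):ℝ) = (n:ℝ) - 1 := by
    push_cast [hn1]; ring
  have hne : (n:ℝ) - 1 ≠ 0 := by linarith
  have hne2 : 2 * (n:ℝ) - 2 ≠ 0 := by linarith
  -- bound on s = x^(n-1)
  have habs : |x ^ (n-1)| < 1/2 := by
    have h1 : |x| ^ (n-1) < ((2:ℝ) ^ (-(1/((n:ℝ)-1)))) ^ (n-1) :=
      pow_lt_pow_left₀ hx (abs_nonneg x) (by omega)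
    have h2 : ((2:ℝ) ^ (-(1/((n:ℝ)-1)))) ^ (n-1) = 1/2 := by
      rw [← Real.rpow_natCast ((2:ℝ) ^ (-(1/((n:ℝ)-1)))) (n-1),
        ← Real.rpow_mul (by norm_num : (0:ℝ) ≤ 2), hcast,
        show -(1/((n:ℝ)-1)) * ((n:ℝ)-1) = -1 by field_simp]
      norm_num [Real.rpow_neg_one]
    calc |x ^ (n-1)| = |x| ^ (n-1) := abs_pow x (n-1)
      _ < _ := h1
      _ = 1/2 := h2
  obtain ⟨hl, hr⟩ := abs_lt.mp habs
  set s : ℝ := x ^ (n-1) with hs_def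
  have ht : (0:ℝ) < 1 - 2*s := by linarith
  have h1s : (0:ℝ) < 1 - s := by linarith
  set t : ℝ := 1 - 2*s with ht_def
  set r : ℝ := -(1 / (2 * (n:ℝ) - 2)) with hr_def
  set u : ℝ := t ^ r with hu_def
  have hst : (0:ℝ) < Real.sqrt t := Real.sqrt_pos.mpr ht
  have hu_pow1 : u ^ (n-1) = 1 / Real.sqrt t := by
    rw [hu_def, ← Real.rpow_natCast (t ^ r) (n-1), ← Real.rpow_mul ht.le, hcast,
      show r * ((n:ℝ)-1) = -(1/2) by rw [hr_def]; field_simp,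
      Real.rpow_neg ht.le, Real.sqrt_eq_rpow]
    norm_num
  have hu_pow2 : u ^ (2*n-2) = 1 / t := by
    have hc2 : ((2*n-2:ℕ):ℝ) = 2*(n:ℝ) - 2 := by rw [Nat.cast_sub (by omega)]; push_cast; ring
    rw [hu_def, ← Real.rpow_natCast (t ^ r) (2*n-2), ← Real.rpow_mul ht.le, hc2,
      show r * (2*(n:ℝ)-2) = -1 by rw [hr_def]; field_simp,
      Real.rpow_neg_one]
    exact (one_div t).symm
  have hXpow1 : X ^ (n-1) = s / Real.sqrt t := by
    rw [hX, mul_pow, hu_pow1]; rw [← hs_def]; ring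
  have hXpow2 : X ^ (2*n-2) = s^2 / t := by
    rw [hX, mul_pow, hu_pow2, show 2*n-2 = (n-1)*2 from by omega, pow_mul, ← hs_def]
    ring
  have hsqrt : Real.sqrt (1 + X ^ (2*n-2)) = (1-s) / Real.sqrt t := by
    rw [hXpow2, show 1 + s^2/t = (1-s)^2 / t by
      rw [eq_div_iff ht.ne', add_mul, div_mul_cancel₀ _ ht.ne', ht_def]; ring]
    rw [Real.sqrt_div (by positivity) t, Real.sqrt_sq h1s.le]
  have hh' : h = s / (1 - s) := by
    have h1 := h1s.ne'
    have h2 := hst.ne'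
    rw [hh, hXpow1, hsqrt]
    field_simp
  refine ⟨hh', ?_, ?_⟩
  · rw [hh', hX]
    have h1h : 1 + s/(1-s) = 1/(1-s) := by field_simp; ring
    rw [h1h]
    field_simp
  · rw [hh', hX]
    have h1h : 1 + s/(1-s) = 1/(1-s) := by field_simp; ring
    rw [h1h]
    have hxn : x ^ n = x * s := by
      conv_lhs => rw [show n = (n-1)+1 from by omega]
      rw [pow_succ, hs_def]; ring
    have hsplit : t ^ ((1 - 2*(n:ℝ)) / (2*(n:ℝ) - 2)) = t⁻¹ * u := by
      rw [hu_def, hr_def, show (1 - 2*(n:ℝ)) / (2*(n:ℝ) - 2)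
          = (-1) + -(1/(2*(n:ℝ)-2)) by field_simp; ring,
        Real.rpow_add ht, Real.rpow_neg_one]
    rw [hxn, hsplit]
    field_simp
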